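/- Suppose λ_{i,1}·λ_{j,2} + η ≠ 0 for all i, j. Then for any n1×n2 real matrix Y and any real number μ, the quadratic form S² = (vec(Y) − μ·1_N)ᵀ·R̃⁻¹·(vec(Y) − μ·1_N) satisfies S² = Σ_{i=1}^{n1} Σ_{j=1}^{n2} Ỹ_{i,j}² / (λ_{i,1}·λ_{j,2} + η), where Ỹ_{i,j} is the (i,j) entry of U1ᵀ·(Y − μ·J)·U2 and J is the n1×n2 all-ones matrix. -/

import Mathlib

open Matrix
open scoped Kronecker

/-- Column-stacking vectorization: the entry of `vec Y` at index `(j, i)` is `Y i j`. -/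
def vec {n1 n2 : ℕ} (Y : Matrix (Fin n1) (Fin n2) ℝ) : Fin n2 × Fin n1 → ℝ :=
  fun p => Y p.2 p.1

lemma kron_mulVec_vec {n1 n2 : ℕ} (A : Matrix (Fin n2) (Fin n2) ℝ)
    (B : Matrix (Fin n1) (Fin n1) ℝ) (X : Matrix (Fin n1) (Fin n2) ℝ) :
    (A ⊗ₖ B) *ᵥ _root_.vec X = _root_.vec (B * X * Aᵀ) := by
  funext p
  simp only [mulVec, dotProduct, _root_.vec, Matrix.mul_apply, kroneckerMap_apply,
    Fintype.sum_prod_type, transpose_apply, Finset.sum_mul, Finset.mul_sum]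
  refine Finset.sum_congr rfl fun x _ => ?_
  refine Finset.sum_congr rfl fun y _ => ?_
  ring

theorem stmt8 (n1 n2 : ℕ) (hn1 : 0 < n1) (hn2 : 0 < n2)
    (R1 U1 : Matrix (Fin n1) (Fin n1) ℝ) (R2 U2 : Matrix (Fin n2) (Fin n2) ℝ)
    (lam1 : Fin n1 → ℝ) (lam2 : Fin n2 → ℝ)
    (hR1sym : R1.IsSymm) (hR2sym : R2.IsSymm)
    (hU1 : U1 * U1ᵀ = 1) (hU1' : U1ᵀ * U1 = 1)
    (hU2 : U2 * U2ᵀ = 1) (hU2' : U2ᵀ * U2 = 1)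
    (hR1 : R1 = U1 * Matrix.diagonal lam1 * U1ᵀ)
    (hR2 : R2 = U2 * Matrix.diagonal lam2 * U2ᵀ)
    (η : ℝ)
    (hnz : ∀ (i : Fin n1) (j : Fin n2), lam1 i * lam2 j + η ≠ 0)
    (Y : Matrix (Fin n1) (Fin n2) ℝ) (μ : ℝ) :
    (_root_.vec Y - μ • (fun _ : Fin n2 × Fin n1 => (1 : ℝ))) ⬝ᵥ
        ((R2 ⊗ₖ R1 + η • (1 : Matrix (Fin n2 × Fin n1) (Fin n2 × Fin n1) ℝ))⁻¹ *ᵥ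
          (_root_.vec Y - μ • (fun _ : Fin n2 × Fin n1 => (1 : ℝ))))
      = ∑ i : Fin n1, ∑ j : Fin n2,
          ((U1ᵀ * (Y - μ • (Matrix.of fun _ _ => (1 : ℝ) : Matrix (Fin n1) (Fin n2) ℝ)) * U2) i j) ^ 2
            / (lam1 i * lam2 j + η) := by
  set Z : Matrix (Fin n1) (Fin n2) ℝ :=
    Y - μ • (Matrix.of fun _ _ => (1 : ℝ) : Matrix (Fin n1) (Fin n2) ℝ) with hZ
  have hv : (_root_.vec Y - μ • (fun _ : Fin n2 × Fin n1 => (1 : ℝ))) = _root_.vec Z := by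
    funext p; simp [_root_.vec, hZ, Matrix.sub_apply]
  set d : Fin n2 × Fin n1 → ℝ := fun p => lam1 p.2 * lam2 p.1 + η with hd
  have hdnz : ∀ p, d p ≠ 0 := fun p => hnz p.2 p.1
  set U : Matrix (Fin n2 × Fin n1) (Fin n2 × Fin n1) ℝ := U2 ⊗ₖ U1 with hU
  have hUt : Uᵀ = U2ᵀ ⊗ₖ U1ᵀ := (kroneckerMap_transpose _ _ _).symm
  have hUU' : Uᵀ * U = 1 := by
    rw [hUt, hU, ← mul_kronecker_mul, hU1', hU2', one_kronecker_one]
  have hUU : U * Uᵀ = 1 := by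
    rw [hUt, hU, ← mul_kronecker_mul, hU1, hU2, one_kronecker_one]
  have hM : R2 ⊗ₖ R1 + η • (1 : Matrix (Fin n2 × Fin n1) (Fin n2 × Fin n1) ℝ)
      = U * Matrix.diagonal d * Uᵀ := by
    rw [hR1, hR2, mul_kronecker_mul, mul_kronecker_mul, ← hU, ← hUt,
      diagonal_kronecker_diagonal]
    have h1 : η • (1 : Matrix (Fin n2 × Fin n1) (Fin n2 × Fin n1) ℝ)
        = U * (η • 1) * Uᵀ := by
      rw [Matrix.mul_smul, Matrix.smul_mul, mul_one, hUU]
    rw [h1, ← Matrix.add_mul, ← Matrix.mul_add]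
    congr 2
    rw [Matrix.smul_one_eq_diagonal, ← Matrix.diagonal_add]
    congr 1
    funext p
    simp [hd, mul_comm]
  have hMinv : (R2 ⊗ₖ R1 + η • (1 : Matrix (Fin n2 × Fin n1) (Fin n2 × Fin n1) ℝ))⁻¹
      = U * Matrix.diagonal (fun p => (d p)⁻¹) * Uᵀ := by
    apply Matrix.inv_eq_right_inv
    rw [hM]
    simp only [Matrix.mul_assoc]
    rw [← Matrix.mul_assoc Uᵀ U, hUU', Matrix.one_mul,
      ← Matrix.mul_assoc (Matrix.diagonal d), Matrix.diagonal_mul_diagonal]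
    have hone : (fun p => d p * (d p)⁻¹) = fun _ => (1 : ℝ) := by
      funext p; exact mul_inv_cancel₀ (hdnz p)
    rw [hone, Matrix.diagonal_one, Matrix.one_mul, hUU]
  rw [hv, hMinv]
  have hw : Uᵀ *ᵥ _root_.vec Z = _root_.vec (U1ᵀ * Z * U2) := by
    rw [hUt]
    have := kron_mulVec_vec U2ᵀ U1ᵀ Z
    rwa [transpose_transpose] at this
  rw [← Matrix.mulVec_mulVec, ← Matrix.mulVec_mulVec, dotProduct_mulVec,
    ← Matrix.mulVec_transpose, hw]
  have : _root_.vec (U1ᵀ * Z * U2) ⬝ᵥ Matrix.diagonal (fun p => (d p)⁻¹) *ᵥ _root_.vec (U1ᵀ * Z * U2)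
      = ∑ p : Fin n2 × Fin n1, (_root_.vec (U1ᵀ * Z * U2) p) ^ 2 * (d p)⁻¹ := by
    simp only [dotProduct, Matrix.mulVec_diagonal]
    refine Finset.sum_congr rfl fun p _ => by ring
  rw [this, Fintype.sum_prod_type, Finset.sum_comm]
  refine Finset.sum_congr rfl fun i _ => Finset.sum_congr rfl fun j _ => ?_
  simp only [_root_.vec, hd, division_def]
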